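/- Let g = gl_{m|n} with standard basis elements E_{ij} of parity p_i + p_j mod 2 satisfying [E_{ij}, E_{kl}] = δ_{kj} E_{il} − δ_{il} E_{kj} (−1)^{(p_i+p_j)(p_k+p_l)} (super bracket). Then in U(gl_{m|n})[[u^{-1}]], the series t_{ij}(u) := δ_{ij} + E_{ij}(−1)^{p_i} u^{-1} satisfy the super Yangian defining relations [t_{ij}(u), t_{kl}(v)] = (u−v)^{-1}(t_{kj}(u) t_{il}(v) − t_{kj}(v) t_{il}(u))·(−1)^{p_i p_j + p_i p_k + p_j p_k}, where [·,·] is the super-commutator in U(gl_{m|n})[[u^{-1},v^{-1}]]. -/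
import Mathlib

open Polynomial


lemma comm_drop_left {R : Type*} [Ring R] {a z w : R} (h : Commute a z) :
    (a + w) * z - z * (a + w) = w * z - z * w := by
  simp only [add_mul, mul_add, h.eq]; abel

lemma comm_drop_right {R : Type*} [Ring R] {c z w : R} (h : Commute c z) :
    z * (c + w) - (c + w) * z = z * w - w * z := by
  simp only [add_mul, mul_add, h.eq]; abel

lemma core_comm {R : Type*} [Ring R] (B D e x y : R)
    (hx : ∀ r, Commute x r) (hy : ∀ r, Commute y r) :
    (B * x) * (D * y) - e * ((D * y) * (B * x)) = (B * D - e * (D * B)) * (x * y) := by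
  have e1 : x * (D * y) = D * (x * y) := by
    rw [(hx (D * y)).eq, mul_assoc, (hy x).eq]
  have e2 : y * (B * x) = B * (x * y) := by
    rw [(hy (B * x)).eq, mul_assoc]
  rw [mul_assoc B x (D*y), e1, mul_assoc D y (B*x), e2]
  noncomm_ring

lemma central_C {R : Type*} [Ring R] {a : R} (ha : ∀ r, Commute a r) (q : R[X]) :
    Commute (C a) q := by
  show C a * q = q * C a
  ext n
  simp [coeff_C_mul, coeff_mul_C, (ha _).eq]

lemma central_X {R : Type*} [Ring R] (q : R[X]) : Commute (X : R[X]) q :=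
  commute_X q

lemma g3 {R : Type*} [Ring R] (A' B' C' D' x y : R)
    (hA : ∀ r, Commute A' r) (hC : ∀ r, Commute C' r)
    (hx : ∀ r, Commute x r) (hy : ∀ r, Commute y r) :
    (A' + B' * x) * (C' + D' * y) - (A' + B' * y) * (C' + D' * x)
      = (A' * D' - B' * C') * (y - x) := by
  have hxC : x * C' = C' * x := (hx C').eq
  have hyC : y * C' = C' * y := (hy C').eq
  have hxD : x * (D' * y) = D' * (x * y) := by
    rw [(hx (D' * y)).eq, mul_assoc, (hy x).eq]
  have hyD : y * (D' * x) = D' * (x * y) := by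
    rw [(hy (D' * x)).eq, mul_assoc]
  simp only [mul_add, add_mul, mul_sub, sub_mul, mul_assoc, hxC, hyC, hxD, hyD]
  abel

lemma shuffle {R : Type*} [Ring R] (M S u v : R)
    (hu : ∀ r, Commute u r) (hv : ∀ r, Commute v r) (hS : ∀ r, Commute S r) :
    u * ((M * S) * v) = v * (M * u) * S := by
  rw [(hu (M * S * v)).eq, (hv (M * u)).eq]
  have h3 : S * (v * u) = u * v * S := by
    rw [(hv u).symm.eq, ← mul_assoc, (hS v).eq, mul_assoc v S u, (hS u).eq, ← mul_assoc,
      (hv u).eq]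
  rw [mul_assoc (M * S) v u, mul_assoc M S (v * u), h3]
  noncomm_ring

lemma master {A : Type*} [Ring A] (a b c d a' b' c' d' e s : A)
    (ha : ∀ r, Commute a r) (hc : ∀ r, Commute c r)
    (ha' : ∀ r, Commute a' r) (hc' : ∀ r, Commute c' r)
    (hs : ∀ r, Commute s r)
    (hDeg : e = 1 ∨ (a = 0 ∧ c = 0))
    (hK : b * d - e * (d * b) = (a' * d' - b' * c') * s) :
    (X - C (X : A[X])) *
      ((C (C a) + C (C b) * C X) * (C (C c) + C (C d) * X)
        - C (C e) * ((C (C c) + C (C d) * X) * (C (C a) + C (C b) * C X)))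
    = C (X : A[X]) * X *
        ((C (C a') + C (C b') * C X) * (C (C c') + C (C d') * X)
          - (C (C a') + C (C b') * X) * (C (C c') + C (C d') * C X)) * C (C s) := by
  have hx : ∀ r : (A[X])[X], Commute (C (X : A[X])) r :=
    fun r => central_C (fun q => commute_X q) r
  have hy : ∀ r : (A[X])[X], Commute (X : (A[X])[X]) r := fun r => commute_X r
  have cc : ∀ {t : A}, (∀ r, Commute t r) → ∀ r : (A[X])[X], Commute (C (C t)) r :=
    fun ht r => central_C (fun q => central_C ht q) r
  -- Step 1: the left bracket
  have step1 :
      (C (C a) + C (C b) * C X) * (C (C c) + C (C d) * X)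
        - C (C e) * ((C (C c) + C (C d) * X) * (C (C a) + C (C b) * C X))
      = C (C (b * d - e * (d * b))) * (C (X : A[X]) * X) := by
    rcases hDeg with he | ⟨ha0, hc0⟩
    · subst he
      rw [map_one, map_one, one_mul]
      rw [comm_drop_left ((cc ha _)), comm_drop_right ((cc hc _))]
      have := core_comm (C (C b)) (C (C d)) (1 : (A[X])[X]) (C (X : A[X])) X hx hy
      rw [one_mul] at this
      rw [this]
      simp only [C_sub, C_mul, one_mul]
    · subst ha0; subst hc0
      simp only [map_zero, zero_add]
      rw [core_comm (C (C b)) (C (C d)) (C (C e)) (C (X : A[X])) X hx hy]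
      simp only [C_sub, C_mul]
  -- Step 2: the right bracket
  have step2 :
      (C (C a') + C (C b') * C X) * (C (C c') + C (C d') * X)
        - (C (C a') + C (C b') * X) * (C (C c') + C (C d') * C X)
      = C (C (a' * d' - b' * c')) * (X - C (X : A[X])) := by
    rw [g3 (C (C a')) (C (C b')) (C (C c')) (C (C d')) (C (X : A[X])) X
      (cc ha') (cc hc') hx hy]
    simp only [C_sub, C_mul]
  rw [step1, step2, hK]
  have hsub : ∀ r : (A[X])[X], Commute (X - C (X : A[X])) r :=
    fun r => (hy r).sub_left (hx r)
  have hxy : ∀ r : (A[X])[X], Commute (C (X : A[X]) * X) r :=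
    fun r => (hx r).mul_left (hy r)
  rw [show (C (C ((a' * d' - b' * c') * s)) : (A[X])[X])
      = C (C (a' * d' - b' * c')) * C (C s) by rw [C_mul, C_mul]]
  exact shuffle _ _ _ _ hsub hxy (cc hs)

lemma ite_central {A : Type*} [Ring A] (P : Prop) [Decidable P] (r : A) :
    Commute (if P then (1:A) else 0) r := by
  split
  · exact Commute.one_left r
  · exact Commute.zero_left r

/-- The evaluation series `t_{ij}(u) = δ_{ij} + E_{ij} (-1)^{p_i} u⁻¹`, written as a polynomial
in the variable `x = u⁻¹` with coefficients in `A`. -/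
noncomputable def evalSeries {A : Type*} [Ring A] (N : ℕ) (p : Fin N → ℕ)
    (E : Fin N → Fin N → A) (i j : Fin N) : A[X] :=
  C (if i = j then (1 : A) else 0) + C ((-1 : A) ^ p i * E i j) * X

/-- If the elements `E_{ij}` satisfy the `gl_{m|n}` super-commutation relations
`[E_{ij}, E_{kl}] = δ_{kj} E_{il} - δ_{il} E_{kj} (-1)^{(p_i+p_j)(p_k+p_l)}`, then the series
`t_{ij}(u) = δ_{ij} + E_{ij} (-1)^{p_i} u⁻¹` satisfy the super Yangian defining relations.
The latter are written, after clearing the denominator `(u-v)` and multiplying by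
`u⁻¹ v⁻¹`, as identities in `A[x, y] = (A[x])[y]` with `x = u⁻¹ = C X` and `y = v⁻¹ = X`,
so that `u - v = (y - x)/(x y)`. -/
theorem stmt_14 {A : Type*} [Ring A] [Algebra ℂ A] (N : ℕ) (p : Fin N → ℕ)
    (hp : ∀ i, p i ≤ 1) (E : Fin N → Fin N → A)
    (hE : ∀ i j k l : Fin N,
      E i j * E k l - (-1 : A) ^ ((p i + p j) * (p k + p l)) * (E k l * E i j)
        = (if k = j then E i l else 0)
          - (-1 : A) ^ ((p i + p j) * (p k + p l)) * (if i = l then E k j else 0)) :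
    ∀ i j k l : Fin N,
      (X - C (X : A[X])) *
        (C (evalSeries N p E i j) * (evalSeries N p E k l).map (C : A →+* A[X])
          - (-1 : (A[X])[X]) ^ ((p i + p j) * (p k + p l)) *
              ((evalSeries N p E k l).map (C : A →+* A[X]) * C (evalSeries N p E i j)))
      = C (X : A[X]) * X *
          (C (evalSeries N p E k j) * (evalSeries N p E i l).map (C : A →+* A[X])
            - (evalSeries N p E k j).map (C : A →+* A[X]) * C (evalSeries N p E i l)) *
          (-1 : (A[X])[X]) ^ (p i * p j + p i * p k + p j * p k) := by
  intro i j k l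
  have sgn : ∀ m : ℕ, ((-1 : (A[X])[X])) ^ m = C (C ((-1 : A) ^ m)) := by
    intro m; simp [map_pow, map_neg, map_one]
  have key : ((-1 : A) ^ p i * E i j) * ((-1 : A) ^ p k * E k l)
      - (-1 : A) ^ ((p i + p j) * (p k + p l)) *
          (((-1 : A) ^ p k * E k l) * ((-1 : A) ^ p i * E i j))
      = ((if k = j then (1 : A) else 0) * ((-1 : A) ^ p i * E i l)
          - ((-1 : A) ^ p k * E k j) * (if i = l then (1 : A) else 0))
          * (-1 : A) ^ (p i * p j + p i * p k + p j * p k) := by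
    have h := hE i j k l
    by_cases hkj : k = j <;> by_cases hil : i = l
    · subst hkj; subst hil
      simp only [if_pos rfl] at h ⊢
      rcases Nat.le_one_iff_eq_zero_or_eq_one.mp (hp i) with hi | hi <;>
        rcases Nat.le_one_iff_eq_zero_or_eq_one.mp (hp k) with hk | hk <;>
        rw [hi, hk] at h ⊢ <;> norm_num at h ⊢ <;>
        first
          | linear_combination (norm := (noncomm_ring; done)) h
          | linear_combination (norm := (noncomm_ring; done)) -h
    · subst hkj
      simp only [if_pos rfl, if_neg hil] at h ⊢
      rcases Nat.le_one_iff_eq_zero_or_eq_one.mp (hp i) with hi | hi <;>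
        rcases Nat.le_one_iff_eq_zero_or_eq_one.mp (hp k) with hk | hk <;>
        rcases Nat.le_one_iff_eq_zero_or_eq_one.mp (hp l) with hl | hl <;>
        rw [hi, hk, hl] at h ⊢ <;> norm_num at h ⊢ <;>
        first
          | linear_combination (norm := (noncomm_ring; done)) h
          | linear_combination (norm := (noncomm_ring; done)) -h
    · subst hil
      simp only [if_pos rfl, if_neg hkj] at h ⊢
      rcases Nat.le_one_iff_eq_zero_or_eq_one.mp (hp i) with hi | hi <;>
        rcases Nat.le_one_iff_eq_zero_or_eq_one.mp (hp j) with hj | hj <;>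
        rcases Nat.le_one_iff_eq_zero_or_eq_one.mp (hp k) with hk | hk <;>
        rw [hi, hj, hk] at h ⊢ <;> norm_num at h ⊢ <;>
        first
          | linear_combination (norm := (noncomm_ring; done)) h
          | linear_combination (norm := (noncomm_ring; done)) -h
    · simp only [if_neg hkj, if_neg hil] at h ⊢
      rcases Nat.le_one_iff_eq_zero_or_eq_one.mp (hp i) with hi | hi <;>
        rcases Nat.le_one_iff_eq_zero_or_eq_one.mp (hp j) with hj | hj <;>
        rcases Nat.le_one_iff_eq_zero_or_eq_one.mp (hp k) with hk | hk <;>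
        rcases Nat.le_one_iff_eq_zero_or_eq_one.mp (hp l) with hl | hl <;>
        rw [hi, hj, hk, hl] at h ⊢ <;> norm_num at h ⊢ <;>
        first
          | linear_combination (norm := (noncomm_ring; done)) h
          | linear_combination (norm := (noncomm_ring; done)) -h
  have hDeg : (-1 : A) ^ ((p i + p j) * (p k + p l)) = 1 ∨
      ((if i = j then (1:A) else 0) = 0 ∧ (if k = l then (1:A) else 0) = 0) := by
    rcases Nat.even_or_odd ((p i + p j) * (p k + p l)) with hev | hod
    · exact Or.inl hev.neg_one_pow
    · right
      rw [Nat.odd_mul] at hod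
      constructor
      · rw [if_neg]; rintro rfl
        have := hod.1; rw [Nat.odd_iff] at this; omega
      · rw [if_neg]; rintro rfl
        have := hod.2; rw [Nat.odd_iff] at this; omega
  have hCX : ∀ b : A, (C (C b * X : A[X]) : (A[X])[X]) = C (C b) * C X := fun b => C_mul
  simp only [evalSeries, Polynomial.map_add, Polynomial.map_mul, Polynomial.map_C,
    Polynomial.map_X, C_add, hCX, sgn]
  refine master _ _ _ _ _ _ _ _ _ _ ?_ ?_ ?_ ?_ ?_ hDeg key <;>
    first
      | exact ite_central _
      | exact fun r => (Commute.neg_one_left r).pow_left _
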